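/- If (G, τ) is a Hausdorff first-countable paratopological group which is SIN, then G is submetrizable. -/

import Mathlib

open Topology Filter Set Pointwise

/-- If `(G, τ)` is a Hausdorff first-countable paratopological group which is SIN
(for every neighborhood `U` of the identity there is a neighborhood `V` of the
identity with `x * V * x⁻¹ ⊆ U` for all `x`), then `G` is submetrizable, i.e.
there is a metrizable topology on `G` coarser than `τ`. -/
theorem hausdorff_SIN_firstCountable_paratopological_group_submetrizable
    {G : Type*} [Group G] [t : TopologicalSpace G] [T2Space G] [ContinuousMul G]
    [FirstCountableTopology G]
    (hSIN : ∀ U ∈ 𝓝 (1 : G), ∃ V ∈ 𝓝 (1 : G), ∀ x : G, ∀ v ∈ V, x * v * x⁻¹ ∈ U) :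
    ∃ t' : TopologicalSpace G, t ≤ t' ∧ @TopologicalSpace.MetrizableSpace G t' := by
  -- a countable antitone basis of `𝓝 1`
  obtain ⟨U, hU⟩ := (𝓝 (1 : G)).exists_antitone_basis
  -- key splitting lemma
  have key : ∀ S : Set G, S ∈ 𝓝 (1 : G) → ∀ n : ℕ, ∃ W : Set G, W ∈ 𝓝 (1 : G) ∧
      W ⊆ U n ∧ W * W ⊆ S ∧ ∀ x : G, ∀ w ∈ W, x * w * x⁻¹ ∈ S := by
    intro S hS n
    have hmul : Filter.Tendsto (fun p : G × G => p.1 * p.2) (𝓝 1 ×ˢ 𝓝 1) (𝓝 (1 : G)) := by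
      have h := continuous_mul.tendsto ((1 : G), (1 : G))
      rw [nhds_prod_eq] at h
      simpa using h
    have hpre : (fun p : G × G => p.1 * p.2) ⁻¹' S ∈ 𝓝 (1 : G) ×ˢ 𝓝 (1 : G) := hmul hS
    obtain ⟨A, hA, B, hB, hAB⟩ := Filter.mem_prod_iff.mp hpre
    have hABmul : (A ∩ B) * (A ∩ B) ⊆ S := by
      rintro z ⟨a, ha, b, hb, rfl⟩
      exact hAB (Set.mk_mem_prod ha.1 hb.2)
    have hABS : A ∩ B ⊆ S := by
      intro a ha
      have : a * 1 ∈ S := hABmul (Set.mul_mem_mul ha (mem_of_mem_nhds (inter_mem hA hB)))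
      simpa using this
    obtain ⟨C, hC, hCconj⟩ := hSIN (A ∩ B) (inter_mem hA hB)
    refine ⟨C ∩ (A ∩ B) ∩ U n, inter_mem (inter_mem hC (inter_mem hA hB)) (hU.mem n),
      fun w hw => hw.2, ?_, ?_⟩
    · intro z hz
      obtain ⟨a, ha, b, hb, rfl⟩ := hz
      exact hABmul (Set.mul_mem_mul ha.1.2 hb.1.2)
    · intro x w hw
      exact hABS (hCconj x w hw.1.1)
  choose F hF1 hF2 hF3 hF4 using key
  -- recursive construction of the invariant chain
  let Wc : ℕ → {S : Set G // S ∈ 𝓝 (1 : G)} := fun n =>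
    Nat.rec ⟨F Set.univ univ_mem 0, hF1 _ _ 0⟩
      (fun n p => ⟨F p.1 p.2 (n + 1), hF1 _ _ _⟩) n
  set W : ℕ → Set G := fun n => (Wc n).1 with hWdef
  have hW : ∀ n, W n ∈ 𝓝 (1 : G) := fun n => (Wc n).2
  have hWone : ∀ n, (1 : G) ∈ W n := fun n => mem_of_mem_nhds (hW n)
  have hWU : ∀ n, W n ⊆ U n := by
    intro n
    cases n with
    | zero => exact hF2 _ _ 0
    | succ m => exact hF2 _ _ _
  have hWmul : ∀ n, W (n + 1) * W (n + 1) ⊆ W n := fun n => hF3 _ _ _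
  have hWconj : ∀ n, ∀ x : G, ∀ w ∈ W (n + 1), x * w * x⁻¹ ∈ W n := fun n => hF4 _ _ _
  have hWsub : ∀ n, W (n + 1) ⊆ W n := by
    intro n w hw
    have : w * 1 ∈ W n := hWmul n (Set.mul_mem_mul hw (hWone (n + 1)))
    simpa using this
  have hWanti : Antitone W := antitone_nat_of_succ_le hWsub
  -- W is a basis of `𝓝 1`
  have hWbasis : ∀ S ∈ 𝓝 (1 : G), ∃ n, W n ⊆ S := by
    intro S hS
    obtain ⟨n, -, hn⟩ := hU.toHasBasis.mem_iff.mp hS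
    exact ⟨n, (hWU n).trans hn⟩
  -- the symmetrized sets
  set V : ℕ → Set G := fun n => W n * (W n)⁻¹ with hVdef
  have hVmem : ∀ n, ∀ g, g ∈ V n ↔ ∃ u ∈ W n, ∃ v ∈ W n, g = u * v⁻¹ := by
    intro n g
    constructor
    · rintro ⟨u, hu, v, hv, rfl⟩
      exact ⟨u, hu, v⁻¹, Set.mem_inv.mp hv, by simp⟩
    · rintro ⟨u, hu, v, hv, rfl⟩
      exact ⟨u, hu, v⁻¹, Set.inv_mem_inv.mpr hv, rfl⟩
  have hVone : ∀ n, (1 : G) ∈ V n := by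
    intro n
    exact (hVmem n 1).mpr ⟨1, hWone n, 1, hWone n, by simp⟩
  have hVanti : ∀ m n, m ≤ n → V n ⊆ V m := by
    intro m n hmn g hg
    obtain ⟨u, hu, v, hv, rfl⟩ := (hVmem n g).mp hg
    exact (hVmem m _).mpr ⟨u, hWanti hmn hu, v, hWanti hmn hv, rfl⟩
  have hWsubV : ∀ n, W n ⊆ V n := by
    intro n w hw
    exact (hVmem n w).mpr ⟨w, hw, 1, hWone n, by simp⟩
  have hVnhds : ∀ n, V n ∈ 𝓝 (1 : G) := fun n => mem_of_superset (hW n) (hWsubV n)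
  -- multiplication
  have hVmul : ∀ n, V (n + 2) * V (n + 2) ⊆ V n := by
    intro n g hg
    obtain ⟨g₁, hg₁, g₂, hg₂, rfl⟩ := hg
    obtain ⟨a, ha, b, hb, rfl⟩ := (hVmem (n + 2) g₁).mp hg₁
    obtain ⟨c, hc, d, hd, rfl⟩ := (hVmem (n + 2) g₂).mp hg₂
    have he : b⁻¹ * c * b ∈ W (n + 1) := by
      have := hWconj (n + 1) b⁻¹ c hc
      simpa using this
    have h1 : a * (b⁻¹ * c * b) ∈ W n :=
      hWmul n (Set.mul_mem_mul (hWsub (n + 1) ha) he)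
    have h2 : d * b ∈ W n := hWsub n (hWmul (n + 1) (Set.mul_mem_mul hd hb))
    have heq : a * b⁻¹ * (c * d⁻¹) = (a * (b⁻¹ * c * b)) * (d * b)⁻¹ := by
      group
    show a * b⁻¹ * (c * d⁻¹) ∈ V n
    rw [heq]
    exact (hVmem n _).mpr ⟨_, h1, _, h2, rfl⟩
  -- conjugation
  have hVconj : ∀ n, ∀ x : G, ∀ g ∈ V (n + 1), x * g * x⁻¹ ∈ V n := by
    intro n x g hg
    obtain ⟨u, hu, v, hv, rfl⟩ := (hVmem (n + 1) g).mp hg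
    have h1 : x * u * x⁻¹ ∈ W n := hWconj n x u hu
    have h2 : x * v * x⁻¹ ∈ W n := hWconj n x v hv
    have heq : x * (u * v⁻¹) * x⁻¹ = (x * u * x⁻¹) * (x * v * x⁻¹)⁻¹ := by group
    rw [heq]
    exact (hVmem n _).mpr ⟨_, h1, _, h2, rfl⟩
  -- inversion
  have hVinv : ∀ n, ∀ g ∈ V n, g⁻¹ ∈ V n := by
    intro n g hg
    obtain ⟨u, hu, v, hv, rfl⟩ := (hVmem n g).mp hg
    exact (hVmem n _).mpr ⟨v, hv, u, hu, by group⟩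
  have hmapl : ∀ x : G, Filter.map (x * ·) (𝓝 (1 : G)) = 𝓝 x := by
    intro x
    have := (Homeomorph.mulLeft x).map_nhds_eq (1 : G)
    simpa using this
  -- intersection of the V n is trivial (uses T2 of the original topology)
  have hVsep : ∀ g : G, (∀ n, g ∈ V n) → g = 1 := by
    intro g hg
    by_contra hg1
    have hdisj : Disjoint (𝓝 g) (𝓝 (1 : G)) := disjoint_nhds_nhds.mpr hg1
    obtain ⟨A, hA, B, hB, hAB⟩ := Filter.disjoint_iff.mp hdisj
    have hA' : (g * ·) ⁻¹' A ∈ 𝓝 (1 : G) := by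
      have : A ∈ Filter.map (g * ·) (𝓝 (1 : G)) := by
        rw [hmapl]; exact hA
      exact this
    obtain ⟨n, hn⟩ := hWbasis _ (inter_mem hA' hB)
    obtain ⟨u, hu, v, hv, hguv⟩ := (hVmem n g).mp (hg n)
    have h1 : g * v ∈ A := (hn hv).1
    have h2 : u ∈ B := (hn hu).2
    have huv : u = g * v := by rw [hguv]; group
    exact Set.disjoint_left.mp hAB (huv ▸ h1) h2
  -- the group filter basis
  let B : GroupFilterBasis G :=
    { sets := Set.range V
      nonempty := ⟨V 0, ⟨0, rfl⟩⟩
      inter_sets := by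
        rintro _ _ ⟨m, rfl⟩ ⟨n, rfl⟩
        exact ⟨V (max m n), ⟨max m n, rfl⟩,
          Set.subset_inter (hVanti m _ (le_max_left m n)) (hVanti n _ (le_max_right m n))⟩
      one' := by rintro _ ⟨n, rfl⟩; exact hVone n
      mul' := by
        rintro _ ⟨n, rfl⟩
        exact ⟨V (n + 2), ⟨n + 2, rfl⟩, hVmul n⟩
      inv' := by
        rintro _ ⟨n, rfl⟩
        exact ⟨V n, ⟨n, rfl⟩, fun g hg => hVinv n g hg⟩
      conj' := by
        rintro x _ ⟨n, rfl⟩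
        exact ⟨V (n + 1), ⟨n + 1, rfl⟩, fun g hg => hVconj n x g hg⟩ }
  have hBmem : ∀ s : Set G, s ∈ B.toFilterBasis.filter ↔ ∃ n, V n ⊆ s := by
    intro s
    rw [FilterBasis.mem_filter_iff]
    constructor
    · rintro ⟨_, ⟨n, rfl⟩, h⟩; exact ⟨n, h⟩
    · rintro ⟨n, h⟩; exact ⟨V n, ⟨n, rfl⟩, h⟩
  refine ⟨B.topology, ?_, ?_⟩
  · -- coarser than t
    refine le_of_nhds_le_nhds fun x => ?_
    rw [B.nhds_eq]
    intro s hs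
    rcases (hBmem _).mp hs with ⟨n, hn⟩
    have : (x * ·) ⁻¹' s ∈ 𝓝 (1 : G) := mem_of_superset (hVnhds n) hn
    have hmap : s ∈ Filter.map (x * ·) (𝓝 (1 : G)) := this
    rwa [hmapl] at hmap
  · -- metrizability
    letI t' := B.topology
    haveI htg : @IsTopologicalGroup G t' _ := B.isTopologicalGroup
    letI u : UniformSpace G := @IsTopologicalGroup.rightUniformSpace G _ t' htg
    have hVbasis : Filter.HasBasis (@nhds G t' 1) (fun _ : ℕ => True) V := by
      rw [B.nhds_one_eq]
      refine Filter.hasBasis_iff.mpr fun s => ?_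
      rw [hBmem]
      constructor
      · rintro ⟨n, hn⟩; exact ⟨n, trivial, hn⟩
      · rintro ⟨n, -, hn⟩; exact ⟨n, hn⟩
    haveI hcg : (@nhds G t' 1).IsCountablyGenerated := hVbasis.isCountablyGenerated
    haveI : (@uniformity G u).IsCountablyGenerated := by
      have : @uniformity G u = Filter.comap (fun p : G × G => p.2 / p.1) (@nhds G t' 1) := by
        simp_rw [div_eq_mul_inv]; rfl
      rw [this]
      exact Filter.comap.isCountablyGenerated _ _
    haveI : @T0Space G t' := by
      refine @t0Space_iff_inseparable G t' |>.mpr fun x y hxy => ?_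
      have hxy' : @nhds G t' x = @nhds G t' y := hxy
      have hmem : ∀ n, x⁻¹ * y ∈ V n := by
        intro n
        have h1 : (x * ·) '' V n ∈ @nhds G t' x := by
          rw [B.nhds_eq]
          exact Filter.image_mem_map ((hBmem _).mpr ⟨n, le_refl _⟩)
        rw [hxy'] at h1
        have h2 : y ∈ (x * ·) '' V n := mem_of_mem_nhds h1
        obtain ⟨v, hv, hvy⟩ := h2
        rwa [← hvy, ← mul_assoc, inv_mul_cancel, one_mul]
      have := hVsep _ hmem
      have hxy1 : x⁻¹ * y = 1 := this
      calc x = x * (x⁻¹ * y) := by rw [hxy1, mul_one]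
        _ = y := by group
    exact @UniformSpace.metrizableSpace G u ‹_› ‹_›
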